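/- There exists a perfect coloring of H with parameter matrix [[0,3,0],[1,0,2],[0,3,0]] (the array [03-102-30]), and any two perfect colorings of H with this parameter matrix are equivalent. -/

import Mathlib

namespace HexGrid

/-- Relations of the hexagonal grid group: x² = y² = z² = (x·y·z)² = 1. -/
def hexRels : Set (FreeGroup (Fin 3)) :=
  {FreeGroup.of 0 * FreeGroup.of 0,
   FreeGroup.of 1 * FreeGroup.of 1,
   FreeGroup.of 2 * FreeGroup.of 2,
   FreeGroup.of 0 * FreeGroup.of 1 * FreeGroup.of 2 *
     (FreeGroup.of 0 * FreeGroup.of 1 * FreeGroup.of 2)}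

/-- The group `G = ⟨x, y, z ∣ x² = y² = z² = (x·y·z)² = 1⟩`. -/
abbrev G := PresentedGroup hexRels

/-- The generators of `G`. -/
def gen (i : Fin 3) : G := PresentedGroup.of i

def x : G := gen 0
def y : G := gen 1
def z : G := gen 2

lemma gen_mul_self (i : Fin 3) : gen i * gen i = 1 := by
  have h : FreeGroup.of i * FreeGroup.of i ∈ Subgroup.normalClosure hexRels :=
    Subgroup.subset_normalClosure (by fin_cases i <;> simp [hexRels])
  exact (QuotientGroup.eq_one_iff _).mpr h

/-- The infinite hexagonal grid `H`: the Cayley graph of `G` with respect to `{x, y, z}`;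
`u` and `v` are adjacent iff `v ∈ {u·x, u·y, u·z}`. -/
def H : SimpleGraph G where
  Adj u v := u ≠ v ∧ ∃ i : Fin 3, v = u * gen i
  symm := by
    constructor
    rintro u v ⟨hne, i, rfl⟩
    exact ⟨hne.symm, i, by rw [mul_assoc, gen_mul_self, mul_one]⟩
  loopless := by constructor; rintro u ⟨hne, -⟩; exact hne rfl

/-- `φ` is a perfect coloring of `H` with parameter matrix `A`: for every vertex `u` and
every color `j`, the number of neighbors of `u` in `H` colored `j` equals `A (φ u) j`. -/
def IsPerfectColoring {k : ℕ} (φ : G → Fin k) (A : Matrix (Fin k) (Fin k) ℕ) : Prop :=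
  ∀ u : G, ∀ j : Fin k, Set.ncard {v : G | H.Adj u v ∧ φ v = j} = A (φ u) j

/-- A matrix is tridiagonal if its entries vanish whenever the indices differ by more
than one. -/
def IsTridiagonal {k : ℕ} (A : Matrix (Fin k) (Fin k) ℕ) : Prop :=
  ∀ i j : Fin k, ((i : ℕ) + 1 < (j : ℕ) ∨ (j : ℕ) + 1 < (i : ℕ)) → A i j = 0

/-- Two colorings are equivalent if one is obtained from the other by composing with a
graph automorphism of `H`. -/
def EquivColoring {k : ℕ} (φ ψ : G → Fin k) : Prop :=
  ∃ g : H ≃g H, ψ = fun v => φ (g v)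

/-- The concrete model group: `ℤ² ⋊ ℤˣ`, sign acting by negation. -/
@[ext] structure W where
  sign : ℤˣ
  t : ℤ × ℤ

namespace W

instance : Mul W := ⟨fun a b => ⟨a.sign * b.sign, a.t + (a.sign : ℤ) • b.t⟩⟩
instance : One W := ⟨⟨1, 0⟩⟩
instance : Inv W := ⟨fun a => ⟨a.sign, -((a.sign : ℤ) • a.t)⟩⟩

lemma mul_def (a b : W) : a * b = ⟨a.sign * b.sign, a.t + (a.sign : ℤ) • b.t⟩ := rfl
lemma one_def : (1 : W) = ⟨1, 0⟩ := rfl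
lemma inv_def (a : W) : a⁻¹ = ⟨a.sign, -((a.sign : ℤ) • a.t)⟩ := rfl

instance : Group W where
  mul_assoc a b c := by
    simp only [mul_def, Units.val_mul]
    ext <;> simp [mul_assoc, mul_smul, smul_add, add_assoc]
  one_mul a := by simp [mul_def, one_def]
  mul_one a := by simp [mul_def, one_def]
  inv_mul_cancel a := by
    have h : ((a.sign : ℤ)) * (a.sign : ℤ) = 1 := by rw [← Units.val_mul, Int.units_mul_self a.sign, Units.val_one]
    simp [mul_def, inv_def, one_def, smul_smul, h]

instance : DecidableEq W := fun a b => by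
  rcases a with ⟨s, t⟩; rcases b with ⟨s', t'⟩
  exact decidable_of_iff (s = s' ∧ t = t') (by simp [W.ext_iff])

lemma one_zpow_t (u : ℤ × ℤ) : ∀ m : ℤ, (⟨1, u⟩ : W) ^ m = ⟨1, m • u⟩ := by
  have key : ∀ n : ℕ, (⟨1, u⟩ : W) ^ (n : ℤ) = ⟨1, (n : ℤ) • u⟩ := by
    intro n
    induction n with
    | zero => simp [one_def]
    | succ k ih =>
      push_cast
      rw [zpow_add_one, ih, mul_def]
      ext <;> simp [add_smul]
  intro m
  rcases Int.eq_nat_or_neg m with ⟨n, rfl | rfl⟩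
  · exact key n
  · rw [zpow_neg, key n, inv_def]
    ext <;> simp

end W


/-! ### basic identities in `G` -/

lemma rel4 : x * y * z * (x * y * z) = 1 := by
  have h : (FreeGroup.of 0 * FreeGroup.of 1 * FreeGroup.of 2 *
      (FreeGroup.of 0 * FreeGroup.of 1 * FreeGroup.of 2) : FreeGroup (Fin 3)) ∈
      Subgroup.normalClosure hexRels :=
    Subgroup.subset_normalClosure (by simp [hexRels])
  exact (QuotientGroup.eq_one_iff _).mpr h

section Identities

variable {Γ : Type*} [Group Γ] (X Y Z : Γ) (hx : X*X=1) (hy : Y*Y=1) (hz : Z*Z=1)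
  (hr : X*Y*Z*(X*Y*Z)=1)

include hx hy hz hr

lemma key_comm : (Y*X)*(Z*X) = (Z*X)*(Y*X) := by
  have xinv : X⁻¹ = X := inv_eq_of_mul_eq_one_right hx
  have yinv : Y⁻¹ = Y := inv_eq_of_mul_eq_one_right hy
  have zinv : Z⁻¹ = Z := inv_eq_of_mul_eq_one_right hz
  have hzyx : X*(Y*Z) = Z*(Y*X) := by
    have h1 : (X*Y*Z)⁻¹ = X*Y*Z := inv_eq_of_mul_eq_one_right hr
    have h2 : (X*Y*Z)⁻¹ = Z*(Y*X) := by
      rw [mul_inv_rev, mul_inv_rev, xinv, yinv, zinv]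
    have h4 : X*Y*Z = Z*(Y*X) := h1.symm.trans h2
    simpa only [mul_assoc] using h4
  have hx' : ∀ w : Γ, X*(X*w) = w := fun w => by rw [← mul_assoc, hx, one_mul]
  have hy' : ∀ w : Γ, Y*(Y*w) = w := fun w => by rw [← mul_assoc, hy, one_mul]
  have hzy' : ∀ w : Γ, Z*(Y*w) = X*(Y*(Z*(X*w))) := by
    intro w
    have e := congrArg (· * (X * w)) hzyx
    simp only [mul_assoc] at e
    rw [hx'] at e
    exact e.symm
  have hsq : (Y*(X*Z))*(Y*(X*Z)) = 1 := by
    calc (Y*(X*Z))*(Y*(X*Z)) = Y*(X*(Z*(Y*(X*Z)))) := by simp only [mul_assoc]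
      _ = Y*(X*(X*(Y*(Z*(X*(X*Z)))))) := by rw [hzy']
      _ = Y*(Y*(Z*Z)) := by rw [hx', hx']
      _ = 1 := by rw [hy', hz]
  have hyxz : Y*(X*Z) = Z*(X*Y) := by
    have h3 : (Y*(X*Z))⁻¹ = Z*(X*Y) := by
      rw [mul_inv_rev, mul_inv_rev, xinv, yinv, zinv, mul_assoc]
    rw [← h3]
    exact (inv_eq_of_mul_eq_one_right hsq).symm
  have e := congrArg (· * X) hyxz
  simp only [mul_assoc] at e ⊢
  exact e

end Identities

lemma xx : x * x = 1 := gen_mul_self 0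
lemma yy : y * y = 1 := gen_mul_self 1
lemma zz : z * z = 1 := gen_mul_self 2
lemma x_inv : x⁻¹ = x := inv_eq_of_mul_eq_one_right xx

/-- Translation generators of `G`. -/
def a : G := y * x
def b : G := z * x

lemma hab : a * b = b * a := key_comm x y z xx yy zz rel4

lemma a_inv : a⁻¹ = x * y := by rw [a, mul_inv_rev, x_inv, inv_eq_of_mul_eq_one_right yy]
lemma b_inv : b⁻¹ = x * z := by rw [b, mul_inv_rev, x_inv, inv_eq_of_mul_eq_one_right zz]

lemma conj_a : (MulAut.conj x) a = a⁻¹ := by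
  rw [MulAut.conj_apply, x_inv, a_inv, a]
  simp only [mul_assoc]
  rw [xx, mul_one]

lemma conj_b : (MulAut.conj x) b = b⁻¹ := by
  rw [MulAut.conj_apply, x_inv, b_inv, b]
  simp only [mul_assoc]
  rw [xx, mul_one]

lemma x_zpow_a (m : ℤ) : x * a ^ m = a ^ (-m) * x := by
  have h2 : x * a ^ m * x⁻¹ = a ^ (-m) := by
    have h1 : (MulAut.conj x) (a ^ m) = a ^ (-m) := by
      rw [map_zpow, conj_a, inv_zpow, zpow_neg]
    simpa [MulAut.conj_apply] using h1
  rw [x_inv] at h2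
  rw [← h2]
  simp only [mul_assoc]
  rw [xx, mul_one]

lemma x_zpow_b (m : ℤ) : x * b ^ m = b ^ (-m) * x := by
  have h2 : x * b ^ m * x⁻¹ = b ^ (-m) := by
    have h1 : (MulAut.conj x) (b ^ m) = b ^ (-m) := by
      rw [map_zpow, conj_b, inv_zpow, zpow_neg]
    simpa [MulAut.conj_apply] using h1
  rw [x_inv] at h2
  rw [← h2]
  simp only [mul_assoc]
  rw [xx, mul_one]

lemma ab_pows (m₁ n₁ m₂ n₂ : ℤ) :
    (a^m₁*b^n₁) * (a^m₂*b^n₂) = a^(m₁+m₂)*b^(n₁+n₂) := by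
  have hc : Commute a b := hab
  calc (a^m₁*b^n₁) * (a^m₂*b^n₂) = a^m₁*(b^n₁*a^m₂)*b^n₂ := by simp only [mul_assoc]
    _ = a^m₁*(a^m₂*b^n₁)*b^n₂ := by rw [((hc.zpow_zpow m₂ n₁).symm.eq : b^n₁*a^m₂ = a^m₂*b^n₁)]
    _ = (a^m₁*a^m₂)*(b^n₁*b^n₂) := by simp only [mul_assoc]
    _ = a^(m₁+m₂)*b^(n₁+n₂) := by rw [← zpow_add, ← zpow_add]

lemma x_pull (m n : ℤ) : x * (a^m * b^n) = a^(-m) * b^(-n) * x := by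
  calc x * (a^m * b^n) = (x * a^m) * b^n := by rw [mul_assoc]
    _ = a^(-m) * (x * b^n) := by rw [x_zpow_a, mul_assoc]
    _ = a^(-m) * (b^(-n) * x) := by rw [x_zpow_b]
    _ = a^(-m) * b^(-n) * x := by rw [mul_assoc]

/-! ### the homomorphisms between `G` and `W` -/

/-- translation parts of the generators -/
def vv : Fin 3 → ℤ × ℤ := ![(0,0), (1,0), (0,1)]

/-- images of the generators in `W` -/
def wgen (i : Fin 3) : W := ⟨-1, vv i⟩

lemma wgen_check : ∀ r ∈ hexRels, (FreeGroup.lift wgen) r = 1 := by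
  intro r hr
  rcases hr with rfl | rfl | rfl | rfl <;>
    · simp only [map_mul, FreeGroup.lift_apply_of]
      decide

/-- The homomorphism `G →* W`. -/
def h : G →* W := PresentedGroup.toGroup wgen_check

lemma h_gen (i : Fin 3) : h (gen i) = wgen i := PresentedGroup.toGroup.of wgen_check

lemma h_a : h a = ⟨1, (1,0)⟩ := by
  have : h a = h y * h x := map_mul h y x
  rw [this, y, x, h_gen, h_gen]
  decide

lemma h_b : h b = ⟨1, (0,1)⟩ := by
  have : h b = h z * h x := map_mul h z x
  rw [this, z, x, h_gen, h_gen]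
  decide



/-! ### the section `W →* G` -/

/-- underlying function of the section `W → G` -/
def sFun (w : W) : G := a ^ w.t.1 * b ^ w.t.2 * (if w.sign = 1 then 1 else x)

lemma sFun_mk (ε : ℤˣ) (m n : ℤ) :
    sFun ⟨ε, (m, n)⟩ = a^m * b^n * (if ε = 1 then 1 else x) := rfl

lemma AxB (m₁ n₁ m₂ n₂ : ℤ) :
    (a^m₁*b^n₁*x)*(a^m₂*b^n₂) = a^(m₁-m₂)*b^(n₁-n₂)*x := by
  rw [mul_assoc (a^m₁*b^n₁) x, x_pull, ← mul_assoc, ab_pows,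
    sub_eq_add_neg m₁ m₂, sub_eq_add_neg n₁ n₂]

lemma sFun_mul (w₁ w₂ : W) : sFun (w₁ * w₂) = sFun w₁ * sFun w₂ := by
  rcases w₁ with ⟨ε₁, m₁, n₁⟩
  rcases w₂ with ⟨ε₂, m₂, n₂⟩
  rcases Int.units_eq_one_or ε₁ with rfl | rfl <;>
    rcases Int.units_eq_one_or ε₂ with rfl | rfl
  · have hw : (⟨1,(m₁,n₁)⟩ : W) * ⟨1,(m₂,n₂)⟩ = ⟨1, (m₁+m₂, n₁+n₂)⟩ := by
      ext <;> simp [W.mul_def]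
    rw [hw, sFun_mk, sFun_mk, sFun_mk, if_pos rfl, mul_one, mul_one, mul_one, ab_pows]
  · have hw : (⟨1,(m₁,n₁)⟩ : W) * ⟨-1,(m₂,n₂)⟩ = ⟨-1, (m₁+m₂, n₁+n₂)⟩ := by
      ext <;> simp [W.mul_def]
    rw [hw, sFun_mk, sFun_mk, sFun_mk, if_pos rfl, mul_one,
      if_neg (by decide : ¬((-1:ℤˣ) = 1))]
    rw [← mul_assoc, ab_pows]
  · have hw : (⟨-1,(m₁,n₁)⟩ : W) * ⟨1,(m₂,n₂)⟩ = ⟨-1, (m₁-m₂, n₁-n₂)⟩ := by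
      ext <;> simp [W.mul_def] <;> ring
    rw [hw, sFun_mk, sFun_mk, sFun_mk, if_pos rfl, mul_one,
      if_neg (by decide : ¬((-1:ℤˣ) = 1))]
    rw [AxB]
  · have hw : (⟨-1,(m₁,n₁)⟩ : W) * ⟨-1,(m₂,n₂)⟩ = ⟨1, (m₁-m₂, n₁-n₂)⟩ := by
      ext <;> simp [W.mul_def] <;> ring
    rw [hw, sFun_mk, sFun_mk, sFun_mk, if_pos rfl, mul_one,
      if_neg (by decide : ¬((-1:ℤˣ) = 1))]
    rw [← mul_assoc (a^m₁*b^n₁*x), AxB, mul_assoc, xx, mul_one]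

/-- The section homomorphism `W →* G`. -/
def s : W →* G := MonoidHom.mk' sFun sFun_mul

lemma s_mk (ε : ℤˣ) (m n : ℤ) :
    s ⟨ε, (m, n)⟩ = a^m * b^n * (if ε = 1 then 1 else x) := rfl

lemma s_wgen (i : Fin 3) : s (wgen i) = gen i := by
  fin_cases i
  · show sFun ⟨-1, (0,0)⟩ = gen 0
    rw [sFun_mk, if_neg (by decide : ¬((-1:ℤˣ) = 1)), zpow_zero, zpow_zero,
      mul_one, one_mul]
    rfl
  · show sFun ⟨-1, (1,0)⟩ = gen 1
    rw [sFun_mk, if_neg (by decide : ¬((-1:ℤˣ) = 1)), zpow_zero, zpow_one, mul_one]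
    show y * x * x = y
    rw [mul_assoc, xx, mul_one]
  · show sFun ⟨-1, (0,1)⟩ = gen 2
    rw [sFun_mk, if_neg (by decide : ¬((-1:ℤˣ) = 1)), zpow_zero, zpow_one, one_mul]
    show z * x * x = z
    rw [mul_assoc, xx, mul_one]

lemma h_s (w : W) : h (s w) = w := by
  rcases w with ⟨ε, m, n⟩
  rw [s_mk]
  rw [map_mul, map_mul, map_zpow, map_zpow, h_a, h_b]
  have e1 : (⟨1,(1,0)⟩ : W)^m = ⟨1,(m,0)⟩ := by
    rw [W.one_zpow_t]; ext <;> simp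
  have e2 : (⟨1,(0,1)⟩ : W)^n = ⟨1,(0,n)⟩ := by
    rw [W.one_zpow_t]; ext <;> simp
  rw [e1, e2]
  rcases Int.units_eq_one_or ε with rfl | rfl
  · rw [if_pos rfl, map_one, mul_one]
    ext <;> simp [W.mul_def]
  · rw [if_neg (by decide : ¬((-1:ℤˣ) = 1))]
    have : h x = wgen 0 := h_gen 0
    rw [this]
    ext <;> simp [W.mul_def, wgen, vv]

lemma s_h (u : G) : s (h u) = u := by
  have e : s.comp h = MonoidHom.id G := by
    apply PresentedGroup.ext
    intro i
    show s (h (gen i)) = gen i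
    rw [h_gen, s_wgen]
  calc s (h u) = (s.comp h) u := rfl
    _ = u := by rw [e]; rfl

lemma h_inj : Function.Injective h := Function.LeftInverse.injective s_h

lemma wgen_sign (i : Fin 3) : (wgen i).sign = -1 := rfl

lemma gen_ne_one (i : Fin 3) : gen i ≠ 1 := by
  intro e
  have e2 : wgen i = 1 := by rw [← h_gen, e, map_one]
  have := congrArg W.sign e2
  rw [wgen_sign] at this
  exact absurd this (by decide)

lemma mul_gen_ne (u : G) (i : Fin 3) : u * gen i ≠ u := by
  intro e
  exact gen_ne_one i (by
    have := congrArg (fun w => u⁻¹ * w) e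
    simpa [← mul_assoc] using this)

lemma gen_injective : Function.Injective gen := by
  intro i j e
  have e2 : wgen i = wgen j := by rw [← h_gen, ← h_gen, e]
  revert e2
  fin_cases i <;> fin_cases j <;> decide



/-! ### counting neighbours -/

lemma adj_iff (u v : G) : H.Adj u v ↔ ∃ i : Fin 3, v = u * gen i := by
  constructor
  · rintro ⟨-, hi⟩; exact hi
  · rintro ⟨i, rfl⟩; exact ⟨(mul_gen_ne u i).symm, i, rfl⟩

lemma mul_gen_injective (u : G) : Function.Injective (fun i : Fin 3 => u * gen i) := by
  intro i j e
  exact gen_injective (mul_left_cancel e)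

lemma nbr_set (u : G) (p : G → Prop) :
    {v | H.Adj u v ∧ p v} = (fun i : Fin 3 => u * gen i) '' {i | p (u * gen i)} := by
  ext v
  constructor
  · rintro ⟨hadj, hp⟩
    obtain ⟨i, rfl⟩ := (adj_iff u v).mp hadj
    exact ⟨i, hp, rfl⟩
  · rintro ⟨i, hp, rfl⟩
    exact ⟨(adj_iff u _).mpr ⟨i, rfl⟩, hp⟩

lemma ncard_nbr (u : G) (p : G → Prop) [DecidablePred p] :
    {v | H.Adj u v ∧ p v}.ncard
      = (Finset.univ.filter fun i : Fin 3 => p (u * gen i)).card := by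
  rw [nbr_set, Set.ncard_image_of_injective _ (mul_gen_injective u),
    ← Set.ncard_coe_finset]
  congr 1
  ext i
  simp

lemma perfect_iff (φ : G → Fin 3) (A : Matrix (Fin 3) (Fin 3) ℕ) :
    IsPerfectColoring φ A ↔
      ∀ u j, (Finset.univ.filter fun i : Fin 3 => φ (u * gen i) = j).card = A (φ u) j := by
  unfold IsPerfectColoring
  constructor
  · intro hp u j; rw [← ncard_nbr u (fun v => φ v = j)]; exact hp u j
  · intro hp u j; rw [ncard_nbr u (fun v => φ v = j)]; exact hp u j

/-! ### stripe classification on `ℤ²` -/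

def XOne (A B C : Prop) : Prop := (A ∧ ¬B ∧ ¬C) ∨ (¬A ∧ B ∧ ¬C) ∨ (¬A ∧ ¬B ∧ C)

section Stripes

variable {f : ℤ → ℤ → Prop} (hR : ∀ m n : ℤ, XOne (f m n) (f (m+1) n) (f m (n+1)))
include hR

lemma diag_fwd (m n : ℤ) (h0 : f m n) : f (m+1) (n+1) := by
  by_contra hc
  have n10 : ¬ f (m+1) n := by have R := hR m n; unfold XOne at R; tauto
  have n01 : ¬ f m (n+1) := by have R := hR m n; unfold XOne at R; tauto
  have h20 : f (m+1+1) n := by have R := hR (m+1) n; unfold XOne at R; tauto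
  have h02 : f m (n+1+1) := by have R := hR m (n+1); unfold XOne at R; tauto
  have n21 : ¬ f (m+1+1) (n+1) := by have R := hR (m+1+1) n; unfold XOne at R; tauto
  have n12 : ¬ f (m+1) (n+1+1) := by have R := hR m (n+1+1); unfold XOne at R; tauto
  have R := hR (m+1) (n+1); unfold XOne at R; tauto

lemma diag_bwd (m n : ℤ) (h1 : f (m+1) (n+1)) : f m n := by
  by_contra hc
  have n10 : ¬ f (m+1) n := by have R := hR (m+1) n; unfold XOne at R; tauto
  have n01 : ¬ f m (n+1) := by have R := hR m (n+1); unfold XOne at R; tauto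
  have R := hR m n; unfold XOne at R; tauto

lemma diag_iff (m n : ℤ) : f m n ↔ f (m+1) (n+1) :=
  ⟨diag_fwd hR m n, diag_bwd hR m n⟩

lemma per3_fwd (m n : ℤ) (h0 : f m n) : f (m+1+1+1) n := by
  have h11 := diag_fwd hR m n h0
  have n20 : ¬ f (m+1+1) n := by have R := hR (m+1) n; unfold XOne at R; tauto
  have n21 : ¬ f (m+1+1) (n+1) := by have R := hR (m+1) (n+1); unfold XOne at R; tauto
  have R := hR (m+1+1) n; unfold XOne at R; tauto

lemma per3_bwd (m n : ℤ) (h3 : f (m+1+1+1) n) : f m n := by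
  have h2a : ¬ f (m+1+1) n := by have R := hR (m+1+1) n; unfold XOne at R; tauto
  have h2b : ¬ f (m+1+1) (n+1) := by have R := hR (m+1+1) n; unfold XOne at R; tauto
  have halt : f (m+1) n ∨ f (m+1) (n+1) := by have R := hR (m+1) n; unfold XOne at R; tauto
  rcases halt with hcase | hcase
  · exact absurd (diag_fwd hR (m+1) n hcase) h2b
  · exact diag_bwd hR m n hcase

lemma per3_iff (m n : ℤ) : f m n ↔ f (m+3) n := by
  have e : m+1+1+1 = m+3 := by ring
  constructor
  · intro hf; rw [← e]; exact per3_fwd hR m n hf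
  · intro hf; refine per3_bwd hR m n ?_; rw [e]; exact hf

lemma stripes : ∃ c : ZMod 3, ∀ m n : ℤ, f m n ↔ ((m - n : ℤ) : ZMod 3) = c := by
  have hdiff : ∀ m n : ℤ, f m n ↔ f (m-n) 0 := by
    have key : ∀ n : ℤ, ∀ m : ℤ, f m n ↔ f (m-n) 0 := by
      intro n
      induction n using Int.induction_on with
      | zero => intro m; norm_num
      | succ k ih =>
        intro m
        have e := diag_iff hR (m-1) k
        rw [show (m-1+1 : ℤ) = m by ring] at e
        rw [← e, ih (m-1), show (m-1-k : ℤ) = m-(k+1) by push_cast; ring]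
      | pred k ih =>
        intro m
        have e := diag_iff hR m (-k-1)
        rw [show ((-k:ℤ)-1+1 : ℤ) = -k by ring] at e
        rw [e, ih (m+1), show (m+1-(-k:ℤ) : ℤ) = m-(-k-1) by push_cast; ring]
    exact fun m n => key n m
  have hper : ∀ (j : ℤ) (k : ℤ), f k 0 ↔ f (k + 3*j) 0 := by
    intro j
    induction j using Int.induction_on with
    | zero => intro k; norm_num
    | succ i ih =>
      intro k
      rw [ih k, per3_iff hR (k+3*i) 0, show (k+3*(i:ℤ)+3 : ℤ) = k+3*((i:ℤ)+1) by ring]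
    | pred i ih =>
      intro k
      rw [ih k]
      have e := per3_iff hR (k+3*(-(i:ℤ)-1)) 0
      rw [show (k+3*(-(i:ℤ)-1)+3 : ℤ) = k+3*(-(i:ℤ)) by ring] at e
      exact e.symm
  have hmod : ∀ k l : ℤ, ((k : ZMod 3) = (l : ZMod 3)) → (f k 0 ↔ f l 0) := by
    intro k l e
    have hd : (3:ℤ) ∣ l - k := by
      have := (ZMod.intCast_eq_intCast_iff (a := k) (b := l) (c := 3)).mp e
      exact_mod_cast this.dvd
    obtain ⟨j, hj⟩ := hd
    have : l = k + 3*j := by linarith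
    rw [this]
    exact hper j k
  have trich : ∀ k : ℤ, (k : ZMod 3) = 0 ∨ (k : ZMod 3) = 1 ∨ (k : ZMod 3) = -1 := by
    intro k
    have : ∀ r : ZMod 3, r = 0 ∨ r = 1 ∨ r = -1 := by decide
    exact this _
  have main : ∀ (r : ℤ), f r 0 → (∀ rr : ℤ, (rr : ZMod 3) ≠ (r : ZMod 3) → ¬ f rr 0) →
      ∃ c : ZMod 3, ∀ k : ℤ, f k 0 ↔ (k : ZMod 3) = c := by
    intro r hr hnot
    refine ⟨(r : ZMod 3), fun k => ⟨fun hf => ?_, fun hc => (hmod r k hc.symm).mp hr⟩⟩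
    by_contra hne
    exact hnot k hne hf
  have hbase := hR 0 0
  have h01 : f 0 1 ↔ f (-1) 0 := by rw [hdiff 0 1]; norm_num
  unfold XOne at hbase
  have hfin : ∃ c : ZMod 3, ∀ k : ℤ, f k 0 ↔ (k : ZMod 3) = c := by
    rcases hbase with ⟨h0, h1, h2⟩ | ⟨h0, h1, h2⟩ | ⟨h0, h1, h2⟩
    · refine main 0 h0 ?_
      intro rr hne
      rcases trich rr with hc | hc | hc
      · exact absurd (by rw [hc]; norm_num) hne
      · intro hf
        exact h1 (by norm_num at h1 ⊢; exact (hmod rr 1 (by rw [hc]; norm_num)).mp hf)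
      · intro hf
        exact (h01.mpr ((hmod rr (-1) (by rw [hc]; norm_num)).mp hf)) |> h2
    · refine main 1 (by norm_num at h1 ⊢; exact h1) ?_
      intro rr hne
      rcases trich rr with hc | hc | hc
      · intro hf
        exact h0 ((hmod rr 0 (by rw [hc]; norm_num)).mp hf)
      · exact absurd (by rw [hc]; norm_num) hne
      · intro hf
        exact (h01.mpr ((hmod rr (-1) (by rw [hc]; norm_num)).mp hf)) |> h2
    · refine main (-1) (h01.mp h2) ?_
      intro rr hne
      rcases trich rr with hc | hc | hc
      · intro hf
        exact h0 ((hmod rr 0 (by rw [hc]; norm_num)).mp hf)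
      · intro hf
        exact h1 (by norm_num at h1 ⊢; exact (hmod rr 1 (by rw [hc]; norm_num)).mp hf)
      · exact absurd (by rw [hc]; push_cast; norm_num) hne
  obtain ⟨c, hc⟩ := hfin
  exact ⟨c, fun m n => by rw [hdiff m n]; exact hc (m-n)⟩

end Stripes



/-! ### the canonical coloring -/

/-- the parameter matrix -/
abbrev M : Matrix (Fin 3) (Fin 3) ℕ := !![0,3,0;1,0,2;0,3,0]

/-- residue used by the canonical coloring -/
def res (t : ℤ × ℤ) : ZMod 3 := ((t.1 - t.2 : ℤ) : ZMod 3)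

/-- the canonical coloring on `W` -/
def col (w : W) : Fin 3 :=
  if w.sign = 1 then (if res w.t = 0 then 0 else 2) else 1

lemma col_neg (t : ℤ × ℤ) : col ⟨-1, t⟩ = 1 := by
  show (if (-1 : ℤˣ) = 1 then (if res t = 0 then (0:Fin 3) else 2) else 1) = 1
  rw [if_neg (by decide : ¬((-1:ℤˣ) = 1))]

lemma col_pos (t : ℤ × ℤ) : col ⟨1, t⟩ = if res t = 0 then 0 else 2 := if_pos rfl

/-- offsets of the three generators -/
def δ : Fin 3 → ZMod 3 := ![0, 1, -1]

lemma res_sub_vv (t : ℤ × ℤ) (i : Fin 3) : res (t - vv i) = res t - δ i := by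
  fin_cases i <;> simp [res, vv, δ, Prod.fst_sub, Prod.snd_sub] <;> push_cast <;> ring

lemma mul_wgen_pos (t : ℤ × ℤ) (i : Fin 3) :
    (⟨1, t⟩ : W) * wgen i = ⟨-1, t + vv i⟩ := by
  ext <;> simp [W.mul_def, wgen]

lemma mul_wgen_neg (t : ℤ × ℤ) (i : Fin 3) :
    (⟨-1, t⟩ : W) * wgen i = ⟨1, t - vv i⟩ := by
  ext <;> simp [W.mul_def, wgen, sub_eq_add_neg]

lemma col_count (w : W) (j : Fin 3) :
    (Finset.univ.filter fun i : Fin 3 => col (w * wgen i) = j).card = M (col w) j := by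
  rcases w with ⟨ε, t⟩
  rcases Int.units_eq_one_or ε with rfl | rfl
  · have hc : ∀ i : Fin 3, col ((⟨1, t⟩ : W) * wgen i) = 1 := by
      intro i; rw [mul_wgen_pos, col_neg]
    simp only [hc, col_pos]
    by_cases hres : res t = 0
    · rw [if_pos hres]; fin_cases j <;> simp [M]
    · rw [if_neg hres]; fin_cases j <;> simp [M]
  · have hc : ∀ i : Fin 3, col ((⟨-1, t⟩ : W) * wgen i)
        = (if res t - δ i = 0 then 0 else 2) := by
      intro i; rw [mul_wgen_neg, col_pos, res_sub_vv]
    simp only [hc, col_neg]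
    have master : ∀ (r : ZMod 3) (j : Fin 3),
        (Finset.univ.filter fun i : Fin 3 =>
          (if r - δ i = 0 then (0 : Fin 3) else 2) = j).card = M 1 j := by decide
    exact master (res t) j

/-- the canonical coloring on `G` -/
def φ₀ : G → Fin 3 := fun u => col (h u)

lemma perfect_φ₀ : IsPerfectColoring φ₀ M := by
  rw [perfect_iff]
  intro u j
  have e : ∀ i : Fin 3, φ₀ (u * gen i) = col (h u * wgen i) := by
    intro i; unfold φ₀; rw [map_mul, h_gen]
  simp only [e]
  exact col_count (h u) j

/-! ### uniqueness machinery on `W` -/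

section Uniq

variable {Φ : W → Fin 3}
  (hΦ : ∀ (w : W) (j : Fin 3),
    (Finset.univ.filter fun i : Fin 3 => Φ (w * wgen i) = j).card = M (Φ w) j)
include hΦ

lemma all_ones {w : W} (hw : Φ w ≠ 1) : ∀ i, Φ (w * wgen i) = 1 := by
  have hcard := hΦ w 1
  have h3 : M (Φ w) 1 = 3 := by
    revert hw; generalize Φ w = c; revert c; decide
  rw [h3] at hcard
  have huniv := Finset.eq_univ_of_card _ (by rw [hcard]; rfl)
  intro i
  have : i ∈ Finset.univ.filter fun i : Fin 3 => Φ (w * wgen i) = 1 := by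
    rw [huniv]; exact Finset.mem_univ i
  exact (Finset.mem_filter.mp this).2

lemma none_one {w : W} (hw : Φ w = 1) : ∀ i, Φ (w * wgen i) ≠ 1 := by
  have hcard := hΦ w 1
  rw [hw] at hcard
  have h0 : M 1 1 = 0 := rfl
  rw [h0] at hcard
  have hempty := Finset.card_eq_zero.mp hcard
  intro i hi
  have : i ∈ Finset.univ.filter fun i : Fin 3 => Φ (w * wgen i) = 1 :=
    Finset.mem_filter.mpr ⟨Finset.mem_univ i, hi⟩
  rw [hempty] at this
  exact absurd this (Finset.notMem_empty i)

lemma alt (w : W) (i : Fin 3) : Φ w = 1 ↔ ¬ (Φ (w * wgen i) = 1) := by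
  constructor
  · intro hw; exact none_one hΦ hw i
  · intro hn
    by_contra hw
    exact hn (all_ones hΦ hw i)

lemma xone_zero {w : W} (hw : Φ w = 1) :
    XOne (Φ (w * wgen 0) = 0) (Φ (w * wgen 1) = 0) (Φ (w * wgen 2) = 0) := by
  have hcard := hΦ w 0
  rw [hw] at hcard
  have h1 : M 1 0 = 1 := rfl
  rw [h1] at hcard
  obtain ⟨i₀, he⟩ := Finset.card_eq_one.mp hcard
  have hp : ∀ i : Fin 3, (Φ (w * wgen i) = 0) ↔ i = i₀ := by
    intro i
    constructor
    · intro hpi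
      have hm : i ∈ Finset.univ.filter fun i : Fin 3 => Φ (w * wgen i) = 0 :=
        Finset.mem_filter.mpr ⟨Finset.mem_univ i, hpi⟩
      rw [he] at hm
      exact Finset.mem_singleton.mp hm
    · rintro rfl
      have hm : i ∈ ({i} : Finset (Fin 3)) := Finset.mem_singleton_self i
      rw [← he] at hm
      exact (Finset.mem_filter.mp hm).2
  fin_cases i₀
  · exact Or.inl ⟨(hp 0).mpr rfl,
      fun hcon => absurd ((hp 1).mp hcon) (by decide),
      fun hcon => absurd ((hp 2).mp hcon) (by decide)⟩
  · exact Or.inr (Or.inl ⟨fun hcon => absurd ((hp 0).mp hcon) (by decide),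
      (hp 1).mpr rfl,
      fun hcon => absurd ((hp 2).mp hcon) (by decide)⟩)
  · exact Or.inr (Or.inr ⟨fun hcon => absurd ((hp 0).mp hcon) (by decide),
      fun hcon => absurd ((hp 1).mp hcon) (by decide),
      (hp 2).mpr rfl⟩)

lemma step2 (t : ℤ × ℤ) (i j : Fin 3) :
    Φ ⟨1, t⟩ = 1 ↔ Φ ⟨1, t + vv i - vv j⟩ = 1 := by
  calc Φ ⟨1, t⟩ = 1 ↔ ¬ (Φ (⟨-1, t + vv i⟩ : W) = 1) := by
        rw [← mul_wgen_pos]; exact alt hΦ _ i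
    _ ↔ ¬ ¬ (Φ (⟨1, t + vv i - vv j⟩ : W) = 1) := by
        rw [← mul_wgen_neg]; exact not_congr (alt hΦ _ j)
    _ ↔ _ := not_not

lemma stepE1 (p q : ℤ) : Φ ⟨1, (p, q)⟩ = 1 ↔ Φ ⟨1, (p+1, q)⟩ = 1 := by
  have e := step2 hΦ (p, q) 1 0
  have : ((p,q) : ℤ×ℤ) + vv 1 - vv 0 = (p+1, q) := by simp [vv]
  rwa [this] at e

lemma stepE2 (p q : ℤ) : Φ ⟨1, (p, q)⟩ = 1 ↔ Φ ⟨1, (p, q+1)⟩ = 1 := by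
  have e := step2 hΦ (p, q) 2 0
  have : ((p,q) : ℤ×ℤ) + vv 2 - vv 0 = (p, q+1) := by simp [vv]
  rwa [this] at e

lemma parity_all (h0 : Φ ⟨1, (0, 0)⟩ ≠ 1) : ∀ p q : ℤ, Φ ⟨1, (p, q)⟩ ≠ 1 := by
  have keyrow : ∀ q p : ℤ, Φ ⟨1, (p, q)⟩ = 1 ↔ Φ ⟨1, (0, q)⟩ = 1 := by
    intro q
    intro p
    induction p using Int.induction_on with
    | zero => exact Iff.rfl
    | succ k ih => rw [← stepE1 hΦ k q]; exact ih
    | pred k ih =>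
      rw [show ((-(k:ℤ)-1 : ℤ), q) = ((-(k:ℤ)-1 : ℤ), q) from rfl]
      have e := stepE1 hΦ (-(k:ℤ)-1) q
      rw [show (-(k:ℤ)-1+1 : ℤ) = -(k:ℤ) by ring] at e
      rw [e]; exact ih
  have keycol : ∀ q : ℤ, Φ ⟨1, ((0:ℤ), q)⟩ = 1 ↔ Φ ⟨1, ((0:ℤ), (0:ℤ))⟩ = 1 := by
    intro q
    induction q using Int.induction_on with
    | zero => exact Iff.rfl
    | succ k ih => rw [← stepE2 hΦ 0 k]; exact ih
    | pred k ih =>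
      have e := stepE2 hΦ 0 (-(k:ℤ)-1)
      rw [show (-(k:ℤ)-1+1 : ℤ) = -(k:ℤ) by ring] at e
      rw [e]; exact ih
  intro p q hone
  exact h0 (((keyrow q p).trans (keycol q)).mp hone)

lemma parity_odd (h0 : Φ ⟨1, (0, 0)⟩ ≠ 1) : ∀ t : ℤ × ℤ, Φ ⟨-1, t⟩ = 1 := by
  intro t
  have e := alt hΦ (⟨1, t⟩ : W) 0
  rw [mul_wgen_pos] at e
  have : (t + vv 0) = t := by simp [vv]
  rw [this] at e
  by_contra hne
  have h1 : Φ ⟨1, t⟩ = 1 := e.mpr hne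
  rcases t with ⟨p, q⟩
  exact parity_all hΦ h0 p q h1

lemma main_match (h0 : Φ ⟨1, (0, 0)⟩ ≠ 1) : ∃ g₀ : W, ∀ w, Φ w = col (g₀ * w) := by
  -- stripe structure for the color-0 set
  have hfR : ∀ m n : ℤ, XOne (Φ ⟨1, (-m, -n)⟩ = 0) (Φ ⟨1, (-(m+1), -n)⟩ = 0)
      (Φ ⟨1, (-m, -(n+1))⟩ = 0) := by
    intro m n
    have X := xone_zero hΦ (parity_odd hΦ h0 (-m, -n))
    have e0 : (⟨-1, ((-m : ℤ), (-n : ℤ))⟩ : W) * wgen 0 = ⟨1, (-m, -n)⟩ := by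
      rw [mul_wgen_neg]; ext <;> simp [vv]
    have e1 : (⟨-1, ((-m : ℤ), (-n : ℤ))⟩ : W) * wgen 1 = ⟨1, (-(m+1), -n)⟩ := by
      rw [mul_wgen_neg]; ext <;> simp [vv] <;> ring
    have e2 : (⟨-1, ((-m : ℤ), (-n : ℤ))⟩ : W) * wgen 2 = ⟨1, (-m, -(n+1))⟩ := by
      rw [mul_wgen_neg]; ext <;> simp [vv] <;> ring
    rw [e0, e1, e2] at X
    exact X
  obtain ⟨c, hc⟩ := stripes hfR
  have hzero : ∀ p q : ℤ, Φ ⟨1, (p, q)⟩ = 0 ↔ (q : ZMod 3) - (p : ZMod 3) = c := by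
    intro p q
    have hthis := hc (-p) (-q)
    rw [show ((-(-p) : ℤ), (-(-q) : ℤ)) = ((p : ℤ), (q : ℤ)) by norm_num] at hthis
    rw [show (((-p) - (-q) : ℤ) : ZMod 3) = (q : ZMod 3) - (p : ZMod 3) by push_cast; ring]
      at hthis
    exact hthis
  refine ⟨⟨1, ((c.val : ℤ), 0)⟩, ?_⟩
  intro w
  rcases w with ⟨ε, p, q⟩
  rcases Int.units_eq_one_or ε with rfl | rfl
  · have e : (⟨1, ((c.val : ℤ), 0)⟩ : W) * ⟨1, (p, q)⟩ = ⟨1, ((c.val : ℤ) + p, q)⟩ := by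
      ext <;> simp [W.mul_def]
    rw [e, col_pos]
    have hL : Φ ⟨1, (p, q)⟩ ≠ 1 := parity_all hΦ h0 p q
    have hres : (res ((c.val : ℤ) + p, q) = 0) ↔ (q : ZMod 3) - (p : ZMod 3) = c := by
      unfold res
      push_cast
      rw [ZMod.natCast_val, ZMod.cast_id]
      constructor
      · intro e'; linear_combination -e'
      · intro e'; linear_combination -e'
    have hiff : (Φ ⟨1, (p, q)⟩ = 0) ↔ ((if res ((c.val : ℤ) + p, q) = 0 then (0:Fin 3) else 2) = 0) := by
      rw [hzero p q]
      by_cases hcond : res ((c.val : ℤ) + p, q) = 0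
      · rw [if_pos hcond]
        rw [hres] at hcond
        simp [hcond]
      · rw [if_neg hcond]
        rw [hres] at hcond
        simp [hcond]
    have hR1 : (if res ((c.val : ℤ) + p, q) = 0 then (0:Fin 3) else 2) ≠ 1 := by
      split <;> decide
    revert hL hR1 hiff
    generalize Φ ⟨1, (p, q)⟩ = u
    generalize (if res ((c.val : ℤ) + p, q) = 0 then (0:Fin 3) else 2) = v
    revert u v
    decide
  · have e : (⟨1, ((c.val : ℤ), 0)⟩ : W) * ⟨-1, (p, q)⟩ = ⟨-1, ((c.val : ℤ) + p, q)⟩ := by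
      ext <;> simp [W.mul_def]
    rw [e, col_neg]
    exact parity_odd hΦ h0 (p, q)

lemma classify : ∃ g₀ : W, ∀ w, Φ w = col (g₀ * w) := by
  by_cases h0 : Φ ⟨1, (0, 0)⟩ = 1
  · -- pass to the translate by ⟨-1,0⟩
    set Φ' : W → Fin 3 := fun w => Φ (⟨-1, ((0:ℤ), (0:ℤ))⟩ * w) with hΦ'def
    have hΦ' : ∀ (w : W) (j : Fin 3),
        (Finset.univ.filter fun i : Fin 3 => Φ' (w * wgen i) = j).card = M (Φ' w) j := by
      intro w j
      have := hΦ (⟨-1, ((0:ℤ), (0:ℤ))⟩ * w) j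
      simp only [hΦ'def, ← mul_assoc] at *
      exact this
    have h0' : Φ' ⟨1, (0, 0)⟩ ≠ 1 := by
      have e : (⟨-1, ((0:ℤ), (0:ℤ))⟩ : W) * ⟨1, (0, 0)⟩ = (⟨1, ((0:ℤ),(0:ℤ))⟩ : W) * wgen 0 := by
        rw [mul_wgen_pos]; ext <;> simp [W.mul_def, vv]
      show Φ _ ≠ 1
      rw [e]
      exact none_one hΦ h0 0
    obtain ⟨g₀, hg₀⟩ := main_match hΦ' h0'
    refine ⟨g₀ * (⟨-1, ((0:ℤ), (0:ℤ))⟩ : W)⁻¹, ?_⟩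
    intro w
    have := hg₀ ((⟨-1, ((0:ℤ), (0:ℤ))⟩ : W)⁻¹ * w)
    simp only [hΦ'def, ← mul_assoc, mul_inv_cancel, one_mul] at this
    exact this
  · exact main_match hΦ h0

end Uniq



/-- left multiplication as a graph automorphism of `H` -/
def leftMulIso (c : G) : H ≃g H where
  toEquiv := Equiv.mulLeft c
  map_rel_iff' := by
    intro u v
    show H.Adj (c * u) (c * v) ↔ H.Adj u v
    constructor
    · rintro ⟨hne, i, he⟩
      refine ⟨fun hne2 => hne (by rw [hne2]), i, ?_⟩
      apply mul_left_cancel (a := c)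
      rw [← mul_assoc]
      exact he
    · rintro ⟨hne, i, rfl⟩
      exact ⟨fun he => hne (mul_left_cancel he), i, (mul_assoc c u (gen i)).symm⟩


/-- There is a perfect coloring of `H` with parameter matrix `[03-102-30]`, and it is
unique up to equivalence. -/
theorem coloring_03_102_30 :
    (∃ φ : G → Fin 3, IsPerfectColoring φ !![0,3,0;1,0,2;0,3,0]) ∧
    ∀ φ ψ : G → Fin 3, IsPerfectColoring φ !![0,3,0;1,0,2;0,3,0] →
      IsPerfectColoring ψ !![0,3,0;1,0,2;0,3,0] → EquivColoring φ ψ := by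
  constructor
  · exact ⟨φ₀, perfect_φ₀⟩
  · intro φ ψ hφ hψ
    have hφc := (perfect_iff φ M).mp hφ
    have hψc := (perfect_iff ψ M).mp hψ
    have key : ∀ χ : G → Fin 3,
        (∀ u j, (Finset.univ.filter fun i : Fin 3 => χ (u * gen i) = j).card = M (χ u) j) →
        ∃ gw : W, ∀ u : G, χ u = col (gw * h u) := by
      intro χ hχ
      have hC : ∀ (w : W) (j : Fin 3),
          (Finset.univ.filter fun i : Fin 3 => (fun w => χ (s w)) (w * wgen i) = j).card
            = M ((fun w => χ (s w)) w) j := by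
        intro w j
        have e : ∀ i : Fin 3, s (w * wgen i) = s w * gen i := by
          intro i; rw [map_mul, s_wgen]
        simp only [e]
        exact hχ (s w) j
      obtain ⟨g₀, hg₀⟩ := classify (Φ := fun w => χ (s w)) hC
      exact ⟨g₀, fun u => by have := hg₀ (h u); rwa [s_h] at this⟩
    obtain ⟨g₁, hg₁⟩ := key φ hφc
    obtain ⟨g₂, hg₂⟩ := key ψ hψc
    refine ⟨leftMulIso (s (g₁⁻¹ * g₂)), ?_⟩
    funext v
    show ψ v = φ (s (g₁⁻¹ * g₂) * v)
    rw [hg₂ v, hg₁ (s (g₁⁻¹ * g₂) * v), map_mul, h_s]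
    congr 1
    rw [← mul_assoc, ← mul_assoc, mul_inv_cancel, one_mul]

end HexGrid
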